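/- arXiv:2501.12013 — 4 statements merged into one kernel-verified Lean document; each statement's English description precedes it below -/
import Mathlib

section
/- Let H: ℝⁿ × ℝⁿ → ℝ be continuous and satisfy |p|²/2 - K₀ ≤ H(y,p) ≤ |p|²/2 + K₀ for all (y,p) and some K₀ > 0. Let h: ℝⁿ → ℝ satisfy ‖h‖_∞ < 1, and define L(y,q,l) := sup_{p∈ℝⁿ} (p·q - H(y,p) - h(y)·l·|p|). Then for all y ∈ ℝⁿ, v ∈ ℝⁿ and l ≥ 0 with l ≤ |v|, one has L(y,-v,-l) ≥ (|v| + h(y)·l)²/2 - K₀. -/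
/-- Lower bound on the modified contact-angle Lagrangian:
`L(y,-v,-l) ≥ (|v| + h(y)l)²/2 - K₀` when `0 ≤ l ≤ |v|`, for a Hamiltonian
pinched between `|p|²/2 ± K₀` and `‖h‖_∞ < 1`. -/
theorem stmt0 (n : ℕ)
    (H : EuclideanSpace ℝ (Fin n) → EuclideanSpace ℝ (Fin n) → ℝ)
    (h : EuclideanSpace ℝ (Fin n) → ℝ)
    (L : EuclideanSpace ℝ (Fin n) → EuclideanSpace ℝ (Fin n) → ℝ → ℝ)
    (K₀ : ℝ) (hK₀ : 0 < K₀)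
    (hHc : Continuous fun yp : EuclideanSpace ℝ (Fin n) × EuclideanSpace ℝ (Fin n) =>
      H yp.1 yp.2)
    (hH : ∀ y p, ‖p‖ ^ 2 / 2 - K₀ ≤ H y p ∧ H y p ≤ ‖p‖ ^ 2 / 2 + K₀)
    (M : ℝ) (hM : M < 1) (hhM : ∀ y, |h y| ≤ M)
    (hL : ∀ y q l, IsLUB
      (Set.range fun p => (inner ℝ p q : ℝ) - H y p - h y * l * ‖p‖) (L y q l)) :
    ∀ y v (l : ℝ), 0 ≤ l → l ≤ ‖v‖ →
      (‖v‖ + h y * l) ^ 2 / 2 - K₀ ≤ L y (-v) (-l) := by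
  intro y v l hl0 hlv
  set c : ℝ := ‖v‖ + h y * l with hc
  clear_value c
  have hc0 : 0 ≤ c := by
    have h1 : -l ≤ h y * l := by
      nlinarith [(abs_le.mp (hhM y)).1, (abs_le.mp (hhM y)).2]
    have : (0:ℝ) ≤ ‖v‖ - l := by linarith
    nlinarith
  by_cases hv : v = 0
  · -- then l = 0, c = 0; use p = 0
    have hl : l = 0 := le_antisymm (by simpa [hv] using hlv) hl0
    subst hl
    have hc' : c = 0 := by simp [hc, hv]
    have hub := (hL y (-v) (-0)).1 (Set.mem_range_self (0 : EuclideanSpace ℝ (Fin n)))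
    simp only [inner_zero_left, norm_zero] at hub
    have hH0 := (hH y 0).2
    simp only [norm_zero] at hH0
    rw [hc']
    have hub' : -H y 0 ≤ L y (-v) (-0) := by linarith [hub]
    refine le_trans ?_ hub'
    nlinarith [hH0]
  · have hvpos : (0:ℝ) < ‖v‖ := norm_pos_iff.mpr hv
    set p : EuclideanSpace ℝ (Fin n) := (c / ‖v‖) • (-v) with hp
    have hnp : ‖p‖ = c := by
      rw [hp, norm_smul, norm_neg, Real.norm_eq_abs,
        abs_of_nonneg (div_nonneg hc0 hvpos.le)]
      field_simp
    have hinner : (inner ℝ p (-v) : ℝ) = c * ‖v‖ := by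
      rw [hp, real_inner_smul_left, inner_neg_left, inner_neg_right, neg_neg]
      rw [real_inner_self_eq_norm_sq]
      field_simp
    have hub := (hL y (-v) (-l)).1 (Set.mem_range_self p)
    have hHp := (hH y p).2
    rw [hnp] at hHp
    rw [hinner, hnp] at hub
    have : c * ‖v‖ - H y p - h y * -l * c ≥ c ^ 2 / 2 - K₀ := by nlinarith
    linarith
end

section
/- Let H: ℝⁿ × ℝⁿ → ℝ be continuous with sup_{(x,p) ∈ K × B̄_R̄(0)} |H(x,p)| < ∞ for every compact K and every R̄, let h: ℝⁿ → ℝ be bounded with ‖h‖_∞ < 1, and define L(x,-v,-l) := sup_{p∈ℝⁿ} (-p·v - H(x,p) + h(x)·l·|p|). Fix R > 0 and choose R̄ > R so that τ := ‖h‖_∞ (R̄+R)/(R̄-R) < 1. Then there exists a constant C > 0 (depending only on R, R̄ and sup over the ball of radius R̄ of |H|) such that whenever (x,p,v,l) ∈ ℝⁿ × B_R(0) × ℝⁿ × (0,∞) satisfies H(x,p) + L(x,-v,-l) ≤ 1 - v·p + h(x)·l·|p|, one has |v| ≤ C + τ·l. -/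
/-- A priori bound on the velocity control in terms of the reflection intensity:
if `H(x,p) + L(x,-v,-l) ≤ 1 - v·p + h(x) l |p|` with `|p| < R`, then `|v| ≤ C + τ l`
where `τ = ‖h‖_∞ (R̄+R)/(R̄-R) < 1`. -/
theorem stmt3 (n : ℕ)
    (H : EuclideanSpace ℝ (Fin n) → EuclideanSpace ℝ (Fin n) → ℝ)
    (h : EuclideanSpace ℝ (Fin n) → ℝ)
    (L : EuclideanSpace ℝ (Fin n) → EuclideanSpace ℝ (Fin n) → ℝ → ℝ)
    (hHc : Continuous fun yp : EuclideanSpace ℝ (Fin n) × EuclideanSpace ℝ (Fin n) =>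
      H yp.1 yp.2)
    (M : ℝ) (hM0 : 0 ≤ M) (hM1 : M < 1) (hhM : ∀ x, |h x| ≤ M)
    (R Rbar : ℝ) (hR : 0 < R) (hRR : R < Rbar)
    (τ : ℝ) (hτ : τ = M * (Rbar + R) / (Rbar - R)) (hτ1 : τ < 1)
    (C₁ : ℝ) (hC₁ : ∀ x p, ‖p‖ ≤ Rbar → |H x p| ≤ C₁)
    (hL : ∀ x q l, IsLUB
      (Set.range fun p => (inner ℝ p q : ℝ) - H x p - h x * l * ‖p‖) (L x q l)) :
    ∃ C > 0, ∀ x p v (l : ℝ), ‖p‖ < R → 0 < l →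
      H x p + L x (-v) (-l) ≤ 1 - (inner ℝ v p : ℝ) + h x * l * ‖p‖ →
      ‖v‖ ≤ C + τ * l := by
  have hRbar : 0 < Rbar := hR.trans hRR
  have hden : 0 < Rbar - R := sub_pos.2 hRR
  have hC₁0 : 0 ≤ C₁ :=
    le_trans (abs_nonneg _) (hC₁ 0 0 (by simp [hRbar.le]))
  refine ⟨(1 + 2 * C₁) / (Rbar - R), by positivity, ?_⟩
  intro x p v l hp hl hineq
  have hτ0 : 0 ≤ τ := by
    rw [hτ]; positivity
  by_cases hv : v = 0
  · have : (0:ℝ) ≤ (1 + 2 * C₁) / (Rbar - R) + τ * l := by positivity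
    simpa [hv] using this
  have hnv : 0 < ‖v‖ := norm_pos_iff.2 hv
  set p' : EuclideanSpace ℝ (Fin n) := (-(Rbar / ‖v‖)) • v with hp'
  have hnp' : ‖p'‖ = Rbar := by
    rw [hp', norm_smul, Real.norm_eq_abs, abs_neg, abs_of_pos (by positivity),
      div_mul_cancel₀ _ hnv.ne']
  have hinner : (inner ℝ p' (-v) : ℝ) = Rbar * ‖v‖ := by
    rw [hp', real_inner_smul_left, inner_neg_right, real_inner_self_eq_norm_sq]
    field_simp
  have hLge : (inner ℝ p' (-v) : ℝ) - H x p' - h x * (-l) * ‖p'‖ ≤ L x (-v) (-l) :=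
    (hL x (-v) (-l)).1 ⟨p', rfl⟩
  have hHp' : |H x p'| ≤ C₁ := hC₁ x p' (le_of_eq hnp')
  have hHp : |H x p| ≤ C₁ := hC₁ x p (le_of_lt (hp.trans hRR))
  have hhx : |h x| ≤ M := hhM x
  have hcs : |(inner ℝ v p : ℝ)| ≤ ‖v‖ * ‖p‖ := abs_real_inner_le_norm v p
  have h1 : |h x * (-l) * ‖p'‖| ≤ M * l * Rbar := by
    rw [hnp', abs_mul, abs_mul, abs_neg, abs_of_pos hl, abs_of_pos hRbar]
    gcongr
  have h2 : h x * l * ‖p‖ ≤ M * l * R := by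
    have hMh : (0:ℝ) ≤ (M - h x) * l * ‖p‖ :=
      mul_nonneg (mul_nonneg (by linarith [(abs_le.1 hhx).2]) hl.le) (norm_nonneg p)
    nlinarith [mul_nonneg hM0 hl.le, hp.le, norm_nonneg p]
  have hvp : -(‖v‖ * R) ≤ (inner ℝ v p : ℝ) := by
    have := (abs_le.1 hcs).1
    nlinarith [norm_nonneg p, hnv.le, hp.le]
  have key : Rbar * ‖v‖ - C₁ - M * l * Rbar ≤ 1 + C₁ + ‖v‖ * R + M * l * R := by
    have hA := (abs_le.1 hHp').2
    have hB := (abs_le.1 hHp).1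
    have hD := (abs_le.1 h1).2
    rw [hinner] at hLge
    linarith
  rw [hτ, div_mul_eq_mul_div, ← add_div, le_div_iff₀ hden]
  nlinarith
end

section
/- Let Ω ⊂ ℝⁿ be an open set with C¹ boundary, with outward unit normal ν, and let γ: ∂Ω → ℝⁿ be a continuous bounded vector field with γ(y)·ν(y) ≥ ρ > 0 for all y ∈ ∂Ω. Suppose η: [0,∞) → closure(Ω) is absolutely continuous, l ∈ L¹_loc([0,∞),[0,∞)), v ∈ L¹_loc([0,∞),ℝⁿ), with η̇(s) + l(s)γ(η(s)) = v(s) a.e., l(s) = 0 whenever η(s) ∈ Ω, and η(s) ∈ closure(Ω) for all s. Then for a.e. s: l(s) ≤ |v(s)|/ρ and |η̇(s)| ≤ (1 + ‖γ‖_∞/ρ)|v(s)|. In particular, when γ = ν (so ρ = 1), l(s) ≤ |v(s)|. -/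
open MeasureTheory

/-- In `ℝ`, the set of points of a set `E` that are not accumulation points of `E`
is countable. -/
lemma countable_isolated_aux (E : Set ℝ) :
    {x | x ∈ E ∧ ¬ AccPt x (Filter.principal E)}.Countable := by
  set S := {x | x ∈ E ∧ ¬ AccPt x (Filter.principal E)} with hS
  have key : ∀ x ∈ S, ∃ pq : ℚ × ℚ, (pq.1 : ℝ) < x ∧ x < pq.2 ∧
      ∀ y ∈ E, (pq.1 : ℝ) < y → y < pq.2 → y = x := by
    intro x hx
    obtain ⟨hxE, hni⟩ := hx
    rw [accPt_iff_nhds] at hni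
    push_neg at hni
    obtain ⟨U, hU, hU2⟩ := hni
    obtain ⟨ε, hε, hball⟩ := Metric.mem_nhds_iff.mp hU
    obtain ⟨p, hp1, hp2⟩ := exists_rat_btwn (show x - ε < x by linarith)
    obtain ⟨q, hq1, hq2⟩ := exists_rat_btwn (show x < x + ε by linarith)
    refine ⟨(p, q), hp2, hq1, ?_⟩
    intro y hyE hy1 hy2
    have hyU : y ∈ U := by
      apply hball
      rw [Metric.mem_ball, Real.dist_eq, abs_lt]
      constructor <;> simp only at hy1 hy2 <;> linarith
    exact hU2 y ⟨hyU, hyE⟩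
  choose! f hf1 hf2 hf3 using key
  have : Set.MapsTo f S (Set.univ : Set (ℚ × ℚ)) := fun x _ => trivial
  refine this.countable_of_injOn ?_ (Set.countable_univ)
  intro x hx x' hx' hfe
  have hx'E : x' ∈ E := hx'.1
  have := hf3 x hx x' hx'E (by rw [hfe]; exact hf1 x' hx') (by rw [hfe]; exact hf2 x' hx')
  exact this.symm

/-- Basic estimates for solutions of the Skorokhod problem: the reflection
intensity `l` and the trajectory speed `|η̇|` are controlled by the control speed
`|v|`: `l(s) ≤ |v(s)|/ρ` and `|η̇(s)| ≤ (1 + ‖γ‖_∞/ρ)|v(s)|` a.e. -/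
theorem stmt5 (n : ℕ)
    (Ω : Set (EuclideanSpace ℝ (Fin n))) (hΩ : IsOpen Ω)
    (ψ : EuclideanSpace ℝ (Fin n) → ℝ) (hψ : ContDiff ℝ 1 ψ)
    (hΩψ : Ω = {x | ψ x < 0}) (hfr : frontier Ω = {x | ψ x = 0})
    (ν γ : EuclideanSpace ℝ (Fin n) → EuclideanSpace ℝ (Fin n))
    (hν1 : ∀ y ∈ frontier Ω, ‖ν y‖ = 1)
    (hψν : ∀ y ∈ frontier Ω, gradient ψ y = ‖gradient ψ y‖ • ν y)
    (hψ0 : ∀ y ∈ frontier Ω, gradient ψ y ≠ 0)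
    (hγc : Continuous γ) (Cγ : ℝ) (hγb : ∀ y, ‖γ y‖ ≤ Cγ)
    (ρ : ℝ) (hρ : 0 < ρ) (hγν : ∀ y ∈ frontier Ω, ρ ≤ (inner ℝ (γ y) (ν y) : ℝ))
    (η η' v : ℝ → EuclideanSpace ℝ (Fin n)) (l : ℝ → ℝ)
    (hl : LocallyIntegrableOn l (Set.Ici 0))
    (hv : LocallyIntegrableOn v (Set.Ici 0))
    (hηd : ∀ᵐ s ∂(volume.restrict (Set.Ioi (0:ℝ))), HasDerivAt η (η' s) s)
    (heq : ∀ᵐ s ∂(volume.restrict (Set.Ioi (0:ℝ))), η' s + l s • γ (η s) = v s)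
    (hl0 : ∀ᵐ s ∂(volume.restrict (Set.Ioi (0:ℝ))), 0 ≤ l s)
    (hlΩ : ∀ᵐ s ∂(volume.restrict (Set.Ioi (0:ℝ))), η s ∈ Ω → l s = 0)
    (hmem : ∀ s : ℝ, 0 ≤ s → η s ∈ closure Ω) :
    ∀ᵐ s ∂(volume.restrict (Set.Ioi (0:ℝ))),
      l s ≤ ‖v s‖ / ρ ∧ ‖η' s‖ ≤ (1 + Cγ / ρ) * ‖v s‖ := by
  have hCγ0 : 0 ≤ Cγ := (norm_nonneg (γ 0)).trans (hγb 0)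
  set E : Set ℝ := {s | 0 < s ∧ ψ (η s) = 0} with hE
  set B : Set ℝ := {x | x ∈ E ∧ ¬ AccPt x (Filter.principal E)} with hBdef
  have hBc : B.Countable := countable_isolated_aux E
  have hBae : ∀ᵐ s ∂(volume.restrict (Set.Ioi (0:ℝ))), s ∉ B := by
    have h0 : volume B = 0 := hBc.measure_zero _
    refine ae_restrict_of_ae ?_
    rw [ae_iff]
    simpa [not_not] using h0
  have hIoi : ∀ᵐ s ∂(volume.restrict (Set.Ioi (0:ℝ))), s ∈ Set.Ioi (0:ℝ) :=
    ae_restrict_mem measurableSet_Ioi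
  filter_upwards [hηd, heq, hl0, hlΩ, hBae, hIoi] with s hd heqs hl0s hlΩs hBs hs
  have hsp : (0:ℝ) < s := hs
  have hcl : η s ∈ Ω ∨ η s ∈ frontier Ω := by
    have := hmem s hsp.le
    rw [closure_eq_interior_union_frontier, hΩ.interior_eq] at this
    exact this
  rcases hcl with hin | hbd
  · -- interior case: l s = 0 and η' s = v s
    have hl0' : l s = 0 := hlΩs hin
    have hev : η' s = v s := by
      rw [← heqs, hl0', zero_smul, add_zero]
    constructor
    · rw [hl0']
      positivity
    · rw [hev]
      nlinarith [norm_nonneg (v s), div_nonneg hCγ0 hρ.le]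
  · -- boundary case
    set y := η s with hy
    have hψy : ψ y = 0 := by rw [hfr] at hbd; exact hbd
    have hsE : s ∈ E := ⟨hsp, hψy⟩
    have hacc : AccPt s (Filter.principal E) := by
      by_contra hcon
      exact hBs ⟨hsE, hcon⟩
    -- derivative of ψ ∘ η at s
    have hψdiff : DifferentiableAt ℝ ψ y := (hψ.differentiable one_ne_zero) y
    have hFD : HasFDerivAt ψ (InnerProductSpace.toDual ℝ _ (gradient ψ y)) y :=
      hψdiff.hasGradientAt.hasFDerivAt
    have hcomp : HasDerivAt (fun t => ψ (η t)) ((inner ℝ (gradient ψ y) (η' s) : ℝ)) s := by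
      have := hFD.comp_hasDerivAt s hd
      simp only [InnerProductSpace.toDual_apply_apply] at this
      exact this
    have hzero : (inner ℝ (gradient ψ y) (η' s) : ℝ) = 0 := by
      set L := nhdsWithin s {s}ᶜ ⊓ Filter.principal E with hL
      have hLne : L.NeBot := hacc
      have h1 : Filter.Tendsto (slope (fun t => ψ (η t)) s) L
          (nhds ((inner ℝ (gradient ψ y) (η' s) : ℝ))) :=
        (hasDerivAt_iff_tendsto_slope.mp hcomp).mono_left inf_le_left
      have h2 : Filter.Tendsto (slope (fun t => ψ (η t)) s) L (nhds 0) := by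
        refine Filter.Tendsto.congr' ?_ tendsto_const_nhds
        filter_upwards [Filter.mem_inf_of_right (Filter.mem_principal_self E)] with t ht
        simp [slope_def_field, ht.2, hψy, (show ψ (η s) = 0 from hψy)]
      exact (tendsto_nhds_unique h1 h2)
    have hνη : (inner ℝ (ν y) (η' s) : ℝ) = 0 := by
      rw [hψν y hbd, real_inner_smul_left] at hzero
      have hn : ‖gradient ψ y‖ ≠ 0 := norm_ne_zero_iff.mpr (hψ0 y hbd)
      exact (mul_eq_zero.mp hzero).resolve_left hn
    have hlineq : l s * ρ ≤ ‖v s‖ := by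
      have hinner : (inner ℝ (ν y) (v s) : ℝ) = l s * (inner ℝ (ν y) (γ y) : ℝ) := by
        rw [← heqs, inner_add_right, hνη, real_inner_smul_right, zero_add]
      have h1 : ρ ≤ (inner ℝ (ν y) (γ y) : ℝ) := by
        rw [real_inner_comm]; exact hγν y hbd
      have h2 : (inner ℝ (ν y) (v s) : ℝ) ≤ ‖v s‖ := by
        have := real_inner_le_norm (ν y) (v s)
        rwa [hν1 y hbd, one_mul] at this
      nlinarith [hl0s]
    have hls : l s ≤ ‖v s‖ / ρ := (le_div_iff₀ hρ).mpr hlineq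
    refine ⟨hls, ?_⟩
    have hη'eq : η' s = v s - l s • γ y := eq_sub_of_add_eq heqs
    have hb1 : ‖η' s‖ ≤ ‖v s‖ + l s * Cγ := by
      rw [hη'eq]
      calc ‖v s - l s • γ y‖ ≤ ‖v s‖ + ‖l s • γ y‖ := norm_sub_le _ _
        _ ≤ ‖v s‖ + l s * Cγ := by
            rw [norm_smul, Real.norm_eq_abs, abs_of_nonneg hl0s]
            exact add_le_add (le_refl _) (mul_le_mul_of_nonneg_left (hγb y) hl0s)
    have hc : l s * Cγ ≤ ‖v s‖ / ρ * Cγ := mul_le_mul_of_nonneg_right hls hCγ0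
    have hring : (1 + Cγ/ρ) * ‖v s‖ = ‖v s‖ + ‖v s‖/ρ * Cγ := by ring
    linarith
end

section
/- Let m*: [1,∞) × ℝⁿ × ℝⁿ → ℝ satisfy: (i) m*(2t, 0, 2y) ≤ 2 m*(t, 0, y) + C and (ii) 2 m*(t, 0, y) ≤ m*(2t, 0, 2y) + C for all t ≥ 1 and |y| ≤ M₀ t, for some constants C, M₀ > 0. Suppose further that for each (t,y) with |y| ≤ M₀ t the limit m̄(t,y) := lim_{k→∞} m*(k t, k·0, k y)/k exists and m̄ is positively 1-homogeneous: m̄(λt, λy) = λ m̄(t,y) for λ > 0. Then for every ε ∈ (0,1], t ≥ ε, and |y| ≤ M₀ t, one has |m̄(t,y) − ε m*(t/ε, 0, y/ε)| ≤ C ε. -/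
/-- Quantitative comparison between the rescaled metric function and its
homogenized limit: approximate sub/superadditivity along the doubling sequence
with error `C` plus existence and homogeneity of the limit `m̄` yield
`|m̄(t,y) − ε m*(t/ε, 0, y/ε)| ≤ C ε`. -/
theorem stmt9 (n : ℕ) (C M₀ : ℝ) (hC : 0 < C) (hM₀ : 0 < M₀)
    (mstar : ℝ → EuclideanSpace ℝ (Fin n) → EuclideanSpace ℝ (Fin n) → ℝ)
    (mbar : ℝ → EuclideanSpace ℝ (Fin n) → ℝ)
    (hsub : ∀ t (y : EuclideanSpace ℝ (Fin n)), 1 ≤ t → ‖y‖ ≤ M₀ * t →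
      mstar (2 * t) 0 ((2:ℝ) • y) ≤ 2 * mstar t 0 y + C)
    (hsup : ∀ t (y : EuclideanSpace ℝ (Fin n)), 1 ≤ t → ‖y‖ ≤ M₀ * t →
      2 * mstar t 0 y ≤ mstar (2 * t) 0 ((2:ℝ) • y) + C)
    (hlim : ∀ t (y : EuclideanSpace ℝ (Fin n)), 0 < t → ‖y‖ ≤ M₀ * t →
      Filter.Tendsto (fun k : ℕ => mstar ((k:ℝ) * t) 0 ((k:ℝ) • y) / (k:ℝ))
        Filter.atTop (nhds (mbar t y)))
    (hhom : ∀ (lam t : ℝ) (y : EuclideanSpace ℝ (Fin n)), 0 < lam →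
      mbar (lam * t) (lam • y) = lam * mbar t y) :
    ∀ (ε t : ℝ) (y : EuclideanSpace ℝ (Fin n)), 0 < ε → ε ≤ 1 → ε ≤ t →
      ‖y‖ ≤ M₀ * t →
      |mbar t y - ε * mstar (t / ε) 0 (ε⁻¹ • y)| ≤ C * ε := by
  have key : ∀ t (y : EuclideanSpace ℝ (Fin n)), 1 ≤ t → ‖y‖ ≤ M₀ * t →
      |mbar t y - mstar t 0 y| ≤ C := by
    intro t y ht hy
    have ht0 : (0:ℝ) < t := lt_of_lt_of_le one_pos ht
    have hbnd : ∀ j : ℕ,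
        mstar ((2:ℝ)^j * t) 0 (((2:ℝ)^j) • y) ≤ 2^j * mstar t 0 y + ((2:ℝ)^j - 1) * C ∧
        2^j * mstar t 0 y - ((2:ℝ)^j - 1) * C ≤ mstar ((2:ℝ)^j * t) 0 (((2:ℝ)^j) • y) := by
      intro j
      induction j with
      | zero => simp
      | succ j ih =>
        have h2j : (1:ℝ) ≤ 2^j := one_le_pow₀ (by norm_num)
        have h2jpos : (0:ℝ) < 2^j := by positivity
        have h1 : (1:ℝ) ≤ 2^j * t := by nlinarith
        have hnorm : ‖((2:ℝ)^j) • y‖ ≤ M₀ * ((2:ℝ)^j * t) := by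
          rw [norm_smul, Real.norm_eq_abs, abs_of_pos h2jpos]
          nlinarith
        have e1 : (2:ℝ) * ((2:ℝ)^j * t) = (2:ℝ)^(j+1) * t := by ring
        have e2 : (2:ℝ) • (((2:ℝ)^j) • y) = ((2:ℝ)^(j+1)) • y := by
          rw [smul_smul]; norm_num [pow_succ]; ring_nf
        have hs1 := hsub ((2:ℝ)^j * t) (((2:ℝ)^j) • y) h1 hnorm
        have hs2 := hsup ((2:ℝ)^j * t) (((2:ℝ)^j) • y) h1 hnorm
        rw [e1, e2] at hs1 hs2
        constructor
        · have := ih.1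
          calc mstar ((2:ℝ)^(j+1) * t) 0 (((2:ℝ)^(j+1)) • y)
              ≤ 2 * mstar ((2:ℝ)^j * t) 0 (((2:ℝ)^j) • y) + C := hs1
            _ ≤ 2^(j+1) * mstar t 0 y + ((2:ℝ)^(j+1) - 1) * C := by
                rw [pow_succ]; nlinarith
        · have := ih.2
          have : 2^(j+1) * mstar t 0 y - ((2:ℝ)^(j+1) - 1) * C
              ≤ 2 * mstar ((2:ℝ)^j * t) 0 (((2:ℝ)^j) • y) - C := by
            rw [pow_succ]; nlinarith
          linarith
    have h2 : Filter.Tendsto (fun j : ℕ => (2:ℕ)^j) Filter.atTop Filter.atTop :=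
      tendsto_pow_atTop_atTop_of_one_lt (by norm_num)
    have hcomp := (hlim t y ht0 hy).comp h2
    have heq : ∀ j : ℕ, (((2:ℕ)^j : ℕ) : ℝ) = (2:ℝ)^j := by intro j; push_cast; ring
    have hub : mbar t y ≤ mstar t 0 y + C := by
      refine le_of_tendsto hcomp (Filter.Eventually.of_forall fun j => ?_)
      simp only [Function.comp, heq]
      have h2jpos : (0:ℝ) < 2^j := by positivity
      rw [div_le_iff₀ h2jpos]
      have := (hbnd j).1
      nlinarith [(hbnd j).1]
    have hlb : mstar t 0 y - C ≤ mbar t y := by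
      refine ge_of_tendsto hcomp (Filter.Eventually.of_forall fun j => ?_)
      simp only [Function.comp, heq]
      have h2jpos : (0:ℝ) < 2^j := by positivity
      rw [le_div_iff₀ h2jpos]
      nlinarith [(hbnd j).2]
    rw [abs_le]
    constructor <;> linarith
  intro ε t y hε hε1 hεt hy
  have hεne : ε ≠ 0 := ne_of_gt hε
  have ht1 : (1:ℝ) ≤ t / ε := (one_le_div hε).mpr hεt
  have hy' : ‖ε⁻¹ • y‖ ≤ M₀ * (t / ε) := by
    rw [norm_smul, Real.norm_eq_abs, abs_of_pos (inv_pos.mpr hε)]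
    rw [div_eq_mul_inv, ← mul_assoc]
    calc ε⁻¹ * ‖y‖ ≤ ε⁻¹ * (M₀ * t) := by
          exact mul_le_mul_of_nonneg_left hy (le_of_lt (inv_pos.mpr hε))
      _ = M₀ * t * ε⁻¹ := by ring
  have hh := hhom ε (t / ε) (ε⁻¹ • y) hε
  have e1 : ε * (t / ε) = t := by field_simp
  have e2 : ε • (ε⁻¹ • y) = y := by
    rw [smul_smul, mul_inv_cancel₀ hεne, one_smul]
  rw [e1, e2] at hh
  have hk := key (t / ε) (ε⁻¹ • y) ht1 hy'
  rw [hh]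
  have : ε * mbar (t / ε) (ε⁻¹ • y) - ε * mstar (t / ε) 0 (ε⁻¹ • y)
      = ε * (mbar (t / ε) (ε⁻¹ • y) - mstar (t / ε) 0 (ε⁻¹ • y)) := by ring
  rw [this, abs_mul, abs_of_pos hε, mul_comm C ε]
  exact mul_le_mul_of_nonneg_left hk (le_of_lt hε)
end
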